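/- For all n ≥ 3, the sequences g and h agree, where g(0)=g(1)=g(2)=0, g(n) = Σ_{i=1}^{n} g(n-i) + Σ_{i=3}^{n-1} (i-2)·2^(n-i-1) + (n-2) for n ≥ 3, and h(0)=h(1)=h(2)=0, h(3)=1, h(n) = 4·(h(n-1) - h(n-2)) for n ≥ 4. -/

import Mathlib

open Finset

lemma sumA (m : ℕ) : (∑ j ∈ range m, (j+1) * 2^(m-1-j)) + (m+2) = 2^(m+1) := by
  induction m with
  | zero => simp
  | succ m ih =>
    have h1 : (∑ j ∈ range (m+1), (j+1) * 2^(m+1-1-j))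
        = (∑ j ∈ range m, 2 * ((j+1) * 2^(m-1-j))) + (m+1) := by
      rw [Finset.sum_range_succ]
      congr 1
      · apply Finset.sum_congr rfl
        intro j hj
        have hj' : j < m := Finset.mem_range.mp hj
        have he : m + 1 - 1 - j = (m - 1 - j) + 1 := by omega
        rw [he, pow_succ]
        ring
      · simp
    rw [h1, ← Finset.mul_sum]
    have h2 : (2:ℕ)^(m+1+1) = 2 * 2^(m+1) := by ring
    linarith

lemma sumB (m : ℕ) : (∑ j ∈ range m, (j+1) * 2^j) + 2^m = m * 2^m + 1 := by
  induction m with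
  | zero => simp
  | succ m ih =>
    rw [Finset.sum_range_succ]
    have e1 : (2:ℕ)^(m+1) = 2 * 2^m := by ring
    have e2 : (m+1) * 2^(m+1) = 2 * (m * 2^m) + 2 * 2^m := by ring
    have e3 : (m+1) * 2^m = m * 2^m + 2^m := by ring
    linarith

/-- The full-history recurrence `g` and the second-order linear recurrence `h`
agree for all `n ≥ 3`. -/
theorem stmt6 (g h : ℕ → ℕ)
    (hg0 : g 0 = 0) (hg1 : g 1 = 0) (hg2 : g 2 = 0)
    (hgrec : ∀ n, 3 ≤ n → g n = (∑ i ∈ Finset.Icc 1 n, g (n - i)) +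
      (∑ i ∈ Finset.Icc 3 (n - 1), (i - 2) * 2 ^ (n - i - 1)) + (n - 2))
    (hh0 : h 0 = 0) (hh1 : h 1 = 0) (hh2 : h 2 = 0) (hh3 : h 3 = 1)
    (hhrec : ∀ n, 4 ≤ n → h n = 4 * (h (n - 1) - h (n - 2))) :
    ∀ n, 3 ≤ n → g n = h n := by
  have hcl : ∀ m : ℕ, h (m + 3) = (m + 1) * 2 ^ m := by
    intro m
    induction m using Nat.strong_induction_on with
    | _ m ih =>
      match m with
      | 0 => simpa using hh3
      | 1 =>
        have hr := hhrec 4 (by norm_num)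
        norm_num [hh2, hh3] at hr
        simpa using hr
      | (k+2) =>
        have h1 := ih (k+1) (by omega)
        have h0 := ih k (by omega)
        have hr := hhrec (k+5) (by omega)
        have e1 : k + 5 - 1 = k + 1 + 3 := by omega
        have e2 : k + 5 - 2 = k + 3 := by omega
        rw [e1, e2, h1, h0] at hr
        have e3 : (k+1+1) * 2^(k+1) = (k+3) * 2^k + (k+1) * 2^k := by ring
        rw [e3, Nat.add_sub_cancel] at hr
        have e4 : k + 2 + 3 = k + 5 := by omega
        rw [e4, hr]
        ring
  have gcl : ∀ m : ℕ, g (m + 3) = (m + 1) * 2 ^ m := by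
    intro m
    induction m using Nat.strong_induction_on with
    | _ m ih =>
      have hr := hgrec (m+3) (by omega)
      -- first sum
      have s1 : (∑ i ∈ Icc 1 (m+3), g (m+3-i)) = ∑ j ∈ range m, (j+1) * 2^j := by
        rw [← Finset.Ico_add_one_right_eq_Icc, Finset.sum_Ico_eq_sum_range]
        have e : m + 3 + 1 - 1 = m + 3 := by omega
        rw [e]
        have e2 : (∑ i ∈ range (m+3), g (m+3-(1+i)))
            = ∑ i ∈ range (m+3), g (m+3-1-i) := by
          apply Finset.sum_congr rfl
          intro j hj
          congr 1
          omega
        rw [e2, Finset.sum_range_reflect]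
        have e3 : m + 3 = 3 + m := by omega
        rw [e3, Finset.sum_range_add]
        have e4 : (∑ i ∈ range 3, g i) = 0 := by
          simp [Finset.sum_range_succ, hg0, hg1, hg2]
        rw [e4, zero_add]
        apply Finset.sum_congr rfl
        intro j hj
        have hj' : j < m := Finset.mem_range.mp hj
        have : 3 + j = j + 3 := by omega
        rw [this, ih j hj']
      -- second sum
      have s2 : (∑ i ∈ Icc 3 (m+3-1), (i-2) * 2^(m+3-i-1))
          = ∑ j ∈ range m, (j+1) * 2^(m-1-j) := by
        have e : m + 3 - 1 = m + 2 := by omega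
        rw [e, ← Finset.Ico_add_one_right_eq_Icc, Finset.sum_Ico_eq_sum_range]
        have e2 : m + 2 + 1 - 3 = m := by omega
        rw [e2]
        apply Finset.sum_congr rfl
        intro j hj
        have hj' : j < m := Finset.mem_range.mp hj
        have f1 : 3 + j - 2 = j + 1 := by omega
        have f2 : m + 3 - (3 + j) - 1 = m - 1 - j := by omega
        rw [f1, f2]
      rw [s1, s2] at hr
      have e5 : m + 3 - 2 = m + 1 := by omega
      rw [e5] at hr
      rw [hr]
      have hA := sumA m
      have hB := sumB m
      have e6 : (2:ℕ)^(m+1) = 2 * 2^m := by ring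
      have e7 : (m+1) * 2^m = m * 2^m + 2^m := by ring
      linarith
  intro n hn
  obtain ⟨m, rfl⟩ : ∃ m, n = m + 3 := ⟨n - 3, by omega⟩
  rw [gcl m, hcl m]
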